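/- Let 1 < p < ∞, p ≠ 2, and r ≥ n. If τ : ℓ_p^n → ℓ_p^r is an isometry, then for every pair of distinct indices j ≠ k, the j-th and k-th columns of τ have disjoint supports. -/

import Mathlib

open Finset

/-- The ℓ_q norm of a finite complex sequence. -/
noncomputable def lpNorm (q : ℝ) {m : ℕ} (x : Fin m → ℂ) : ℝ :=
  (∑ i, ‖x i‖ ^ q) ^ (1 / q)

/-! ### Auxiliary real power inequalities -/

lemma real_subadd {θ X Y : ℝ} (hθ0 : 0 < θ) (hθ1 : θ ≤ 1) (hX : 0 ≤ X) (hY : 0 ≤ Y) :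
    (X + Y) ^ θ ≤ X ^ θ + Y ^ θ := by
  lift X to NNReal using hX
  lift Y to NNReal using hY
  have h := NNReal.rpow_add_le_add_rpow X Y hθ0.le hθ1
  exact_mod_cast h

lemma real_superadd {θ X Y : ℝ} (hθ1 : 1 ≤ θ) (hX : 0 ≤ X) (hY : 0 ≤ Y) :
    X ^ θ + Y ^ θ ≤ (X + Y) ^ θ := by
  lift X to NNReal using hX
  lift Y to NNReal using hY
  have h := NNReal.add_rpow_le_rpow_add X Y hθ1
  exact_mod_cast h

lemma strict_subadd {θ X Y : ℝ} (hθ0 : 0 < θ) (hθ1 : θ < 1) (hX : 0 < X) (hY : 0 < Y) :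
    (X + Y) ^ θ < X ^ θ + Y ^ θ := by
  have hXY : 0 < X + Y := by linarith
  have hs1 : X / (X + Y) < 1 := by rw [div_lt_one hXY]; linarith
  have ht1 : Y / (X + Y) < 1 := by rw [div_lt_one hXY]; linarith
  have h1 : X / (X + Y) < (X / (X + Y)) ^ θ := by
    have := Real.rpow_lt_rpow_of_exponent_gt (by positivity) hs1 hθ1
    simpa using this
  have h2 : Y / (X + Y) < (Y / (X + Y)) ^ θ := by
    have := Real.rpow_lt_rpow_of_exponent_gt (by positivity) ht1 hθ1
    simpa using this
  have hsum : X / (X + Y) + Y / (X + Y) = 1 := by field_simp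
  have hgt : 1 < (X / (X + Y)) ^ θ + (Y / (X + Y)) ^ θ := by linarith
  have hpow : (0:ℝ) < (X + Y) ^ θ := Real.rpow_pos_of_pos hXY θ
  have hx' : X ^ θ = (X + Y) ^ θ * (X / (X + Y)) ^ θ := by
    rw [← Real.mul_rpow hXY.le (by positivity)]
    congr 1; field_simp
  have hy' : Y ^ θ = (X + Y) ^ θ * (Y / (X + Y)) ^ θ := by
    rw [← Real.mul_rpow hXY.le (by positivity)]
    congr 1; field_simp
  calc (X + Y) ^ θ = (X + Y) ^ θ * 1 := by ring
    _ < (X + Y) ^ θ * ((X / (X + Y)) ^ θ + (Y / (X + Y)) ^ θ) := by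
        exact mul_lt_mul_of_pos_left hgt hpow
    _ = X ^ θ + Y ^ θ := by rw [mul_add, ← hx', ← hy']

lemma strict_superadd {θ X Y : ℝ} (hθ1 : 1 < θ) (hX : 0 < X) (hY : 0 < Y) :
    X ^ θ + Y ^ θ < (X + Y) ^ θ := by
  have hXY : 0 < X + Y := by linarith
  have hs1 : X / (X + Y) < 1 := by rw [div_lt_one hXY]; linarith
  have ht1 : Y / (X + Y) < 1 := by rw [div_lt_one hXY]; linarith
  have h1 : (X / (X + Y)) ^ θ < X / (X + Y) := by
    have := Real.rpow_lt_rpow_of_exponent_gt (by positivity) hs1 hθ1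
    simpa using this
  have h2 : (Y / (X + Y)) ^ θ < Y / (X + Y) := by
    have := Real.rpow_lt_rpow_of_exponent_gt (by positivity) ht1 hθ1
    simpa using this
  have hsum : X / (X + Y) + Y / (X + Y) = 1 := by field_simp
  have hlt : (X / (X + Y)) ^ θ + (Y / (X + Y)) ^ θ < 1 := by linarith
  have hpow : (0:ℝ) < (X + Y) ^ θ := Real.rpow_pos_of_pos hXY θ
  have hx' : X ^ θ = (X + Y) ^ θ * (X / (X + Y)) ^ θ := by
    rw [← Real.mul_rpow hXY.le (by positivity)]
    congr 1; field_simp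
  have hy' : Y ^ θ = (X + Y) ^ θ * (Y / (X + Y)) ^ θ := by
    rw [← Real.mul_rpow hXY.le (by positivity)]
    congr 1; field_simp
  calc X ^ θ + Y ^ θ = (X + Y) ^ θ * ((X / (X + Y)) ^ θ + (Y / (X + Y)) ^ θ) := by
        rw [mul_add, ← hx', ← hy']
    _ < (X + Y) ^ θ * 1 := mul_lt_mul_of_pos_left hlt hpow
    _ = (X + Y) ^ θ := by ring

lemma nn_aux1 {θ : ℝ} (hθ0 : 0 < θ) (hθ1 : θ ≤ 1) (X Y : NNReal) :
    X ^ θ + Y ^ θ ≤ 2 ^ (1 - θ) * (X + Y) ^ θ := by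
  have hq : 1 ≤ 1 / θ := by rw [le_div_iff₀ hθ0]; linarith
  have h := NNReal.rpow_add_le_mul_rpow_add_rpow (X ^ θ) (Y ^ θ) hq
  have hXθ : (X ^ θ) ^ (1 / θ) = X := by
    rw [← NNReal.rpow_mul, mul_one_div, div_self hθ0.ne', NNReal.rpow_one]
  have hYθ : (Y ^ θ) ^ (1 / θ) = Y := by
    rw [← NNReal.rpow_mul, mul_one_div, div_self hθ0.ne', NNReal.rpow_one]
  rw [hXθ, hYθ] at h
  have h2 := NNReal.rpow_le_rpow h hθ0.le
  rw [← NNReal.rpow_mul, NNReal.mul_rpow, ← NNReal.rpow_mul] at h2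
  have e1 : 1 / θ * θ = 1 := by field_simp
  have e2 : (1 / θ - 1) * θ = 1 - θ := by
    rw [sub_mul, one_div, inv_mul_cancel₀ hθ0.ne', one_mul]
  rw [e1, e2, NNReal.rpow_one] at h2
  exact h2

lemma real_aux1 {θ X Y : ℝ} (hθ0 : 0 < θ) (hθ1 : θ ≤ 1) (hX : 0 ≤ X) (hY : 0 ≤ Y) :
    X ^ θ + Y ^ θ ≤ 2 ^ (1 - θ) * (X + Y) ^ θ := by
  lift X to NNReal using hX
  lift Y to NNReal using hY
  have h := nn_aux1 hθ0 hθ1 X Y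
  exact_mod_cast h

lemma nn_aux2 {θ : ℝ} (hθ1 : 1 ≤ θ) (X Y : NNReal) :
    2 ^ (1 - θ) * (X + Y) ^ θ ≤ X ^ θ + Y ^ θ := by
  have h := NNReal.rpow_add_le_mul_rpow_add_rpow X Y hθ1
  have h2 := mul_le_mul_right h ((2:NNReal) ^ (1 - θ))
  rwa [← mul_assoc, ← NNReal.rpow_add two_ne_zero, show (1 - θ) + (θ - 1) = 0 by ring,
    NNReal.rpow_zero, one_mul] at h2

lemma real_aux2 {θ X Y : ℝ} (hθ1 : 1 ≤ θ) (hX : 0 ≤ X) (hY : 0 ≤ Y) :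
    2 ^ (1 - θ) * (X + Y) ^ θ ≤ X ^ θ + Y ^ θ := by
  lift X to NNReal using hX
  lift Y to NNReal using hY
  have h := nn_aux2 hθ1 X Y
  exact_mod_cast h

/-! ### Pointwise chain lemmas -/

lemma norm_rpow_eq {p : ℝ} (hp : 0 < p) (x : ℂ) :
    ‖x‖ ^ p = (‖x‖ ^ (2:ℝ)) ^ (p / 2) := by
  rw [← Real.rpow_mul (norm_nonneg x), show (2:ℝ) * (p / 2) = p by ring]

lemma rpow_two_eq {x : ℝ} (hx : 0 ≤ x) : x ^ (2:ℝ) = x * x := by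
  rw [show (2:ℝ) = ((2:ℕ):ℝ) by norm_num, Real.rpow_natCast]
  ring

lemma parallelogram_rpow (a b : ℂ) :
    ‖a + b‖ ^ (2:ℝ) + ‖a - b‖ ^ (2:ℝ) = 2 * (‖a‖ ^ (2:ℝ) + ‖b‖ ^ (2:ℝ)) := by
  rw [rpow_two_eq (norm_nonneg _), rpow_two_eq (norm_nonneg _),
    rpow_two_eq (norm_nonneg _), rpow_two_eq (norm_nonneg _)]
  simpa only [sq] using parallelogram_law_with_norm ℂ a b

lemma chain_le {p : ℝ} (hp1 : 1 < p) (hp2 : p < 2) (a b : ℂ) :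
    ‖a + b‖ ^ p + ‖a - b‖ ^ p ≤ 2 * (‖a‖ ^ (2:ℝ) + ‖b‖ ^ (2:ℝ)) ^ (p / 2) := by
  have hp0 : 0 < p := by linarith
  have hθ0 : 0 < p / 2 := by linarith
  have hθ1 : p / 2 ≤ 1 := by linarith
  set θ := p / 2 with hθ
  set X := ‖a‖ ^ (2:ℝ)
  set Y := ‖b‖ ^ (2:ℝ)
  have hXn : 0 ≤ X := Real.rpow_nonneg (norm_nonneg a) 2
  have hYn : 0 ≤ Y := Real.rpow_nonneg (norm_nonneg b) 2
  rw [norm_rpow_eq hp0 (a + b), norm_rpow_eq hp0 (a - b)]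
  calc (‖a + b‖ ^ (2:ℝ)) ^ θ + (‖a - b‖ ^ (2:ℝ)) ^ θ
      ≤ 2 ^ (1 - θ) * (‖a + b‖ ^ (2:ℝ) + ‖a - b‖ ^ (2:ℝ)) ^ θ :=
        real_aux1 hθ0 hθ1 (Real.rpow_nonneg (norm_nonneg _) 2)
          (Real.rpow_nonneg (norm_nonneg _) 2)
    _ = 2 ^ (1 - θ) * (2 * (X + Y)) ^ θ := by rw [parallelogram_rpow]
    _ = 2 * (X + Y) ^ θ := by
        rw [Real.mul_rpow (by norm_num) (by positivity), ← mul_assoc,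
          ← Real.rpow_add two_pos]
        norm_num

lemma chain_ge {p : ℝ} (hp2 : 2 < p) (a b : ℂ) :
    2 * (‖a‖ ^ (2:ℝ) + ‖b‖ ^ (2:ℝ)) ^ (p / 2) ≤ ‖a + b‖ ^ p + ‖a - b‖ ^ p := by
  have hp0 : 0 < p := by linarith
  have hθ1 : 1 ≤ p / 2 := by linarith
  set θ := p / 2 with hθ
  set X := ‖a‖ ^ (2:ℝ)
  set Y := ‖b‖ ^ (2:ℝ)
  rw [norm_rpow_eq hp0 (a + b), norm_rpow_eq hp0 (a - b)]
  calc 2 * (X + Y) ^ θ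
      = 2 ^ (1 - θ) * (2 * (X + Y)) ^ θ := by
        rw [Real.mul_rpow (by norm_num) (by positivity), ← mul_assoc,
          ← Real.rpow_add two_pos]
        norm_num
    _ = 2 ^ (1 - θ) * (‖a + b‖ ^ (2:ℝ) + ‖a - b‖ ^ (2:ℝ)) ^ θ := by rw [parallelogram_rpow]
    _ ≤ (‖a + b‖ ^ (2:ℝ)) ^ θ + (‖a - b‖ ^ (2:ℝ)) ^ θ :=
        real_aux2 hθ1 (Real.rpow_nonneg (norm_nonneg _) 2)
          (Real.rpow_nonneg (norm_nonneg _) 2)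

lemma point_le {p : ℝ} (hp1 : 1 < p) (hp2 : p < 2) (a b : ℂ) :
    ‖a + b‖ ^ p + ‖a - b‖ ^ p ≤ 2 * (‖a‖ ^ p + ‖b‖ ^ p) := by
  have hp0 : 0 < p := by linarith
  have h1 := chain_le hp1 hp2 a b
  have h2 : (‖a‖ ^ (2:ℝ) + ‖b‖ ^ (2:ℝ)) ^ (p/2) ≤ (‖a‖ ^ (2:ℝ)) ^ (p/2) + (‖b‖ ^ (2:ℝ)) ^ (p/2) :=
    real_subadd (by linarith) (by linarith) (Real.rpow_nonneg (norm_nonneg _) 2)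
      (Real.rpow_nonneg (norm_nonneg _) 2)
  rw [norm_rpow_eq hp0 a, norm_rpow_eq hp0 b]
  linarith

lemma point_ge {p : ℝ} (hp2 : 2 < p) (a b : ℂ) :
    2 * (‖a‖ ^ p + ‖b‖ ^ p) ≤ ‖a + b‖ ^ p + ‖a - b‖ ^ p := by
  have hp0 : 0 < p := by linarith
  have h1 := chain_ge hp2 a b
  have h2 : (‖a‖ ^ (2:ℝ)) ^ (p/2) + (‖b‖ ^ (2:ℝ)) ^ (p/2) ≤ (‖a‖ ^ (2:ℝ) + ‖b‖ ^ (2:ℝ)) ^ (p/2) :=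
    real_superadd (by linarith) (Real.rpow_nonneg (norm_nonneg _) 2)
      (Real.rpow_nonneg (norm_nonneg _) 2)
  rw [norm_rpow_eq hp0 a, norm_rpow_eq hp0 b]
  linarith

lemma point_eq_lt {p : ℝ} (hp1 : 1 < p) (hp2 : p < 2) (a b : ℂ)
    (h : ‖a + b‖ ^ p + ‖a - b‖ ^ p = 2 * (‖a‖ ^ p + ‖b‖ ^ p)) : a = 0 ∨ b = 0 := by
  have hp0 : 0 < p := by linarith
  by_contra hc
  push_neg at hc
  have hX : 0 < ‖a‖ ^ (2:ℝ) := Real.rpow_pos_of_pos (norm_pos_iff.2 hc.1) 2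
  have hY : 0 < ‖b‖ ^ (2:ℝ) := Real.rpow_pos_of_pos (norm_pos_iff.2 hc.2) 2
  have hstrict := strict_subadd (show (0:ℝ) < p/2 by linarith) (by linarith) hX hY
  have hchain := chain_le hp1 hp2 a b
  rw [norm_rpow_eq hp0 a, norm_rpow_eq hp0 b] at h
  linarith

lemma point_eq_gt {p : ℝ} (hp2 : 2 < p) (a b : ℂ)
    (h : ‖a + b‖ ^ p + ‖a - b‖ ^ p = 2 * (‖a‖ ^ p + ‖b‖ ^ p)) : a = 0 ∨ b = 0 := by
  have hp0 : 0 < p := by linarith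
  by_contra hc
  push_neg at hc
  have hX : 0 < ‖a‖ ^ (2:ℝ) := Real.rpow_pos_of_pos (norm_pos_iff.2 hc.1) 2
  have hY : 0 < ‖b‖ ^ (2:ℝ) := Real.rpow_pos_of_pos (norm_pos_iff.2 hc.2) 2
  have hstrict := strict_superadd (show (1:ℝ) < p/2 by linarith) hX hY
  have hchain := chain_ge hp2 a b
  rw [norm_rpow_eq hp0 a, norm_rpow_eq hp0 b] at h
  linarith

/-! ### Sum computations -/

lemma sum_single {p : ℝ} (hp : p ≠ 0) {m : ℕ} (j : Fin m) (c : ℂ) :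
    ∑ i, ‖(Pi.single j c : Fin m → ℂ) i‖ ^ p = ‖c‖ ^ p := by
  rw [Fintype.sum_eq_single j]
  · simp
  · intro i hij
    simp [Pi.single_apply, hij, Real.zero_rpow hp]

lemma sum_two {p : ℝ} (hp : p ≠ 0) {m : ℕ} {j k : Fin m} (hjk : j ≠ k) (c d : ℂ) :
    ∑ i, ‖((Pi.single j c + Pi.single k d : Fin m → ℂ)) i‖ ^ p = ‖c‖ ^ p + ‖d‖ ^ p := by
  have key : ∀ i, ‖((Pi.single j c + Pi.single k d : Fin m → ℂ)) i‖ ^ p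
      = (if i = j then ‖c‖ ^ p else 0) + (if i = k then ‖d‖ ^ p else 0) := by
    intro i
    rcases eq_or_ne i j with rfl | hij
    · simp [Pi.single_apply, hjk, Ne.symm hjk]
    · rcases eq_or_ne i k with rfl | hik
      · simp [Pi.single_apply, hij]
      · simp [Pi.single_apply, hij, hik, Real.zero_rpow hp]
  simp_rw [key, Finset.sum_add_distrib, Finset.sum_ite_eq' Finset.univ,
    Finset.mem_univ, if_pos]

/-- If `1 < p < ∞`, `p ≠ 2`, `r ≥ n`, and `τ : ℓ_p^n → ℓ_p^r` is an isometry, then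
distinct columns of `τ` have disjoint supports. -/
theorem isometry_columns_disjoint (p : ℝ) (hp : 1 < p) (hp2 : p ≠ 2)
    (n r : ℕ) (hnr : n ≤ r) (τ : Matrix (Fin r) (Fin n) ℂ)
    (hiso : ∀ x : Fin n → ℂ, lpNorm p (τ.mulVec x) = lpNorm p x) :
    ∀ j k : Fin n, j ≠ k → ∀ i : Fin r, τ i j = 0 ∨ τ i k = 0 := by
  have hp0 : (0:ℝ) < p := by linarith
  have hpne : p ≠ 0 := hp0.ne'
  -- sums are preserved
  have hS : ∀ x : Fin n → ℂ, ∑ i, ‖τ.mulVec x i‖ ^ p = ∑ i, ‖x i‖ ^ p := by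
    intro x
    have h := congrArg (· ^ p) (hiso x)
    simp only [lpNorm] at h
    have h1 : (0:ℝ) ≤ ∑ i, ‖τ.mulVec x i‖ ^ p :=
      Finset.sum_nonneg fun i _ => Real.rpow_nonneg (norm_nonneg _) p
    have h2 : (0:ℝ) ≤ ∑ i, ‖x i‖ ^ p :=
      Finset.sum_nonneg fun i _ => Real.rpow_nonneg (norm_nonneg _) p
    rwa [← Real.rpow_mul h1, ← Real.rpow_mul h2, one_div,
      inv_mul_cancel₀ hpne, Real.rpow_one, Real.rpow_one] at h
  intro j k hjk i
  -- column sums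
  have hcol : ∀ l : Fin n, ∑ i, ‖τ i l‖ ^ p = 1 := by
    intro l
    have h := hS (Pi.single l 1)
    rw [sum_single hpne] at h
    simpa [Matrix.mulVec_single] using h
  have hadd : ∑ i, ‖τ i j + τ i k‖ ^ p = 2 := by
    have h := hS (Pi.single j 1 + Pi.single k 1)
    rw [sum_two hpne hjk] at h
    rw [Matrix.mulVec_add] at h
    simp only [Matrix.mulVec_single, Pi.smul_apply, op_smul_eq_mul, Matrix.col_apply, mul_one, Pi.add_apply, norm_one, Real.one_rpow] at h
    linarith [h]
  have hsub : ∑ i, ‖τ i j - τ i k‖ ^ p = 2 := by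
    have h := hS (Pi.single j 1 + Pi.single k (-1))
    rw [sum_two hpne hjk] at h
    rw [Matrix.mulVec_add] at h
    simp only [Matrix.mulVec_single, Pi.smul_apply, op_smul_eq_mul, Matrix.col_apply, mul_one, mul_neg_one, Pi.add_apply, norm_one,
      norm_neg, Real.one_rpow] at h
    have : ∑ i, ‖τ i j + -τ i k‖ ^ p = 2 := by linarith [h]
    simpa [sub_eq_add_neg] using this
  -- the total defect is zero
  have hsumt : ∑ i, (‖τ i j + τ i k‖ ^ p + ‖τ i j - τ i k‖ ^ p
      - 2 * (‖τ i j‖ ^ p + ‖τ i k‖ ^ p)) = 0 := by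
    have e : ∑ i, (‖τ i j + τ i k‖ ^ p + ‖τ i j - τ i k‖ ^ p
        - 2 * (‖τ i j‖ ^ p + ‖τ i k‖ ^ p))
        = (∑ i, ‖τ i j + τ i k‖ ^ p) + (∑ i, ‖τ i j - τ i k‖ ^ p)
          - 2 * ((∑ i, ‖τ i j‖ ^ p) + (∑ i, ‖τ i k‖ ^ p)) := by
      rw [Finset.sum_sub_distrib, Finset.sum_add_distrib, ← Finset.mul_sum,
        Finset.sum_add_distrib]
    rw [e, hadd, hsub, hcol j, hcol k]
    norm_num
  rcases lt_or_gt_of_ne hp2 with hplt | hpgt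
  · -- p < 2 : each summand is ≤ 0
    have hnonpos : ∀ i ∈ Finset.univ, (‖τ i j + τ i k‖ ^ p + ‖τ i j - τ i k‖ ^ p
        - 2 * (‖τ i j‖ ^ p + ‖τ i k‖ ^ p)) ≤ 0 := by
      intro i _
      have := point_le hp hplt (τ i j) (τ i k)
      linarith
    have hz := (Finset.sum_eq_zero_iff_of_nonpos hnonpos).1 hsumt i (Finset.mem_univ i)
    exact point_eq_lt hp hplt (τ i j) (τ i k) (by linarith)
  · -- p > 2 : each summand is ≥ 0
    have hnonneg : ∀ i ∈ Finset.univ, 0 ≤ (‖τ i j + τ i k‖ ^ p + ‖τ i j - τ i k‖ ^ p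
        - 2 * (‖τ i j‖ ^ p + ‖τ i k‖ ^ p)) := by
      intro i _
      have := point_ge hpgt (τ i j) (τ i k)
      linarith
    have hz := (Finset.sum_eq_zero_iff_of_nonneg hnonneg).1 hsumt i (Finset.mem_univ i)
    exact point_eq_gt hpgt (τ i j) (τ i k) (by linarith)
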